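/- arXiv:2202.03307 — 5 statements merged into one kernel-verified Lean document; each statement's English description precedes it below -/
import Mathlib

section
/- The function (a,b) ↦ χ(a+b>1)/((a+b)² ⟨a−b⟩²) is integrable in the following sense: for every fixed k ∈ ℝ³, ∫_{ℝ³} χ(|k|+|ξ|>1) / ((|k|+|ξ|)² ⟨|k|−|ξ|⟩²) dξ ≤ C for a constant C independent of k. -/
open MeasureTheory Real Set

/-- Uniform bound: for every `k ∈ ℝ³`,
`∫_{ℝ³} χ(|k|+|ξ|>1) / ((|k|+|ξ|)² ⟨|k|−|ξ|⟩²) dξ ≤ C` with `C` independent of `k`,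
where `⟨t⟩² = 1 + t²`. -/
theorem integral_far_kernel_uniform_bound :
    ∃ C : ℝ, 0 < C ∧ ∀ k : EuclideanSpace ℝ (Fin 3),
      (∫ ξ : EuclideanSpace ℝ (Fin 3),
          (if 1 < ‖k‖ + ‖ξ‖ then
            1 / ((‖k‖ + ‖ξ‖) ^ 2 * (1 + (‖k‖ - ‖ξ‖) ^ 2)) else 0)) ≤ C := by
  set V : ℝ := (volume (Metric.ball (0 : EuclideanSpace ℝ (Fin 3)) 1)).toReal with hV
  have hVpos : 0 < V :=
    ENNReal.toReal_pos (Metric.measure_ball_pos _ _ one_pos).ne' measure_ball_lt_top.ne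
  refine ⟨3 * V * π, by positivity, fun k => ?_⟩
  set a : ℝ := ‖k‖ with ha
  have ha0 : 0 ≤ a := norm_nonneg k
  set F : ℝ → ℝ := fun r => if 1 < a + r then 1 / ((a + r) ^ 2 * (1 + (a - r) ^ 2)) else 0
    with hF
  have hpolar := integral_fun_norm_addHaar (volume : Measure (EuclideanSpace ℝ (Fin 3))) F
  simp only [finrank_euclideanSpace, Fintype.card_fin] at hpolar
  norm_num at hpolar
  have hEq : (∫ ξ : EuclideanSpace ℝ (Fin 3),
      (if 1 < ‖k‖ + ‖ξ‖ then
        1 / ((‖k‖ + ‖ξ‖) ^ 2 * (1 + (‖k‖ - ‖ξ‖) ^ 2)) else 0)) =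
      ∫ ξ : EuclideanSpace ℝ (Fin 3), F ‖ξ‖ := rfl
  rw [hEq, hpolar]
  set g : ℝ → ℝ := fun r => (1 + (a - r) ^ 2)⁻¹ with hg
  have hgint : Integrable g := by
    have := integrable_inv_one_add_sq.comp_sub_left a
    simpa [hg] using this
  have hgnonneg : ∀ r, 0 ≤ g r := fun r => by positivity
  have hgval : ∫ r : ℝ, g r = π := by
    rw [hg]
    rw [show (fun r : ℝ => (1 + (a - r) ^ 2)⁻¹)
        = fun r : ℝ => (fun x : ℝ => (1 + x ^ 2)⁻¹) (a - r) from rfl,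
      integral_sub_left_eq_self (fun x : ℝ => (1 + x ^ 2)⁻¹) volume a]
    exact integral_univ_inv_one_add_sq
  have key : (∫ r in Ioi (0 : ℝ), r ^ 2 * F r) ≤ π := by
    have h1 : (∫ r in Ioi (0 : ℝ), r ^ 2 * F r) ≤ ∫ r in Ioi (0 : ℝ), g r := by
      refine integral_mono_of_nonneg ?_ hgint.restrict ?_
      · refine ae_restrict_of_forall_mem measurableSet_Ioi fun r hr => ?_
        simp only [smul_eq_mul, hF]
        split_ifs with hc
        · positivity
        · simp
      · refine ae_restrict_of_forall_mem measurableSet_Ioi fun r hr => ?_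
        simp only [smul_eq_mul, hF, hg]
        split_ifs with hc
        · have hr0 : (0 : ℝ) < r := hr
          have hden : (0 : ℝ) < 1 + (a - r) ^ 2 := by positivity
          have hsum : (0 : ℝ) < a + r := lt_trans one_pos hc
          rw [mul_one_div, div_le_iff₀ (by positivity)]
          have hre : (1 + (a - r) ^ 2)⁻¹ * ((a + r) ^ 2 * (1 + (a - r) ^ 2))
              = (a + r) ^ 2 := by
            field_simp
          rw [hre]
          nlinarith
        · simp only [mul_zero]
          positivity
    have h2 : (∫ r in Ioi (0 : ℝ), g r) ≤ ∫ r : ℝ, g r :=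
      setIntegral_le_integral hgint (Filter.Eventually.of_forall hgnonneg)
    calc (∫ r in Ioi (0 : ℝ), r ^ 2 * F r) ≤ ∫ r in Ioi (0 : ℝ), g r := h1
      _ ≤ ∫ r : ℝ, g r := h2
      _ = π := hgval
  rw [measureReal_def] at hpolar ⊢
  rw [← hV] at *
  nlinarith [key, hVpos, hgval]
end

section
/- Schur-type kernel bound, L¹ side: with K(x,y) as above (nonnegative W₁, W₂ ∈ L¹(ℝ³)), the operator Tψ(x) = ∫ K(x,y)ψ(y) dy is bounded on L¹(ℝ³): ‖Tψ‖_{L¹} ≤ C (‖W₁‖_{𝒦} + ‖W₁‖_{L¹}) ‖W₂‖_{L¹} ‖ψ‖_{L¹}, where ‖W₁‖_{𝒦} := ∫ |W₁(η)| ⟨η⟩/|η| dη. -/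
open MeasureTheory Real Set
open scoped ENNReal

noncomputable section SchurAuxSection

namespace SchurAux

local notation "E3" => EuclideanSpace ℝ (Fin 3)

/-- Radial Schur kernel. -/
def schurKer (s t : ℝ) : ℝ :=
  Real.sqrt (1 + s ^ 2) / s *
    (if 1 < s + t then 1 / ((s + t) ^ 2 * (1 + (s - t) ^ 2)) else 0)

lemma schurKer_nonneg {s : ℝ} (hs : 0 ≤ s) (t : ℝ) : 0 ≤ schurKer s t := by
  unfold schurKer
  apply mul_nonneg (div_nonneg (Real.sqrt_nonneg _) hs)
  split_ifs <;> positivity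

lemma schurKer_meas2 : Measurable fun p : ℝ × ℝ => schurKer p.1 p.2 := by
  unfold schurKer
  have h1 : Measurable fun p : ℝ × ℝ => Real.sqrt (1 + p.1 ^ 2) / p.1 := by fun_prop
  refine h1.mul ?_
  refine Measurable.ite ?_ (by fun_prop) measurable_const
  exact measurableSet_lt measurable_const (by fun_prop)

lemma schurKer_pointwise {s t : ℝ} (hs : 0 < s) (ht : 0 ≤ t) :
    s ^ 2 * schurKer s t ≤ 2 / (1 + (s - t) ^ 2) := by
  unfold schurKer
  split_ifs with h1
  · have hA : Real.sqrt (1 + s ^ 2) ≤ 1 + s := by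
      rw [show (1:ℝ) + s = Real.sqrt ((1+s)^2) from (Real.sqrt_sq (by positivity)).symm]
      exact Real.sqrt_le_sqrt (by nlinarith)
    have hA0 : 0 ≤ Real.sqrt (1 + s ^ 2) := Real.sqrt_nonneg _
    have hD : (0:ℝ) < (s + t) ^ 2 * (1 + (s - t) ^ 2) := by positivity
    have key : s ^ 2 * (Real.sqrt (1 + s ^ 2) / s * (1 / ((s + t) ^ 2 * (1 + (s - t) ^ 2))))
        = s * Real.sqrt (1 + s ^ 2) / ((s + t) ^ 2 * (1 + (s - t) ^ 2)) := by
      field_simp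
    rw [key, div_le_div_iff₀ hD (by positivity)]
    have h2 : s * Real.sqrt (1 + s ^ 2) ≤ s * (1 + s) :=
      mul_le_mul_of_nonneg_left hA hs.le
    have h3 : s * (1 + s) ≤ 2 * (s + t) ^ 2 := by nlinarith
    nlinarith [sq_nonneg (s - t), mul_le_mul_of_nonneg_right h2
      (by positivity : (0:ℝ) ≤ 1 + (s-t)^2)]
  · simp only [mul_zero]
    positivity

attribute [irreducible] schurKer

lemma lintegral_norm_E3 (f : ℝ → ℝ≥0∞) (hf : Measurable f) :
    ∫⁻ (x : E3), f ‖x‖ = (volume : Measure E3).toSphere univ *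
      ∫⁻ r in Ioi (0 : ℝ), ENNReal.ofReal (r ^ 2) * f r := by
  have hdim : Module.finrank ℝ E3 - 1 = 2 := by
    rw [finrank_euclideanSpace_fin]
  have h2 : ∫⁻ (x : E3), f ‖x‖ = ∫⁻ (x : ({(0 : E3)}ᶜ : Set E3)), f ‖x.1‖
      ∂(Measure.comap Subtype.val volume) := by
    have hs := setLIntegral_subtype (μ := (volume : Measure E3))
      (measurableSet_singleton 0).compl univ (fun x => f ‖x‖)
    simp only [Measure.restrict_univ, image_univ, Subtype.range_coe_subtype,
      Set.setOf_mem_eq] at hs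
    rw [hs, restrict_compl_singleton]
  have hme : Measurable fun p : ↥(Metric.sphere (0:E3) 1) × ↥(Ioi (0:ℝ)) => f p.2.1 :=
    hf.comp (measurable_subtype_coe.comp measurable_snd)
  have h3 : ∫⁻ (x : ({(0 : E3)}ᶜ : Set E3)), f ‖x.1‖ ∂(Measure.comap Subtype.val volume)
      = ∫⁻ (p : ↥(Metric.sphere (0:E3) 1) × ↥(Ioi (0:ℝ))), f p.2.1
          ∂(((volume : Measure E3).toSphere).prod
            (Measure.volumeIoiPow (Module.finrank ℝ E3 - 1))) :=
    by rw [← (volume : Measure E3).measurePreserving_homeomorphUnitSphereProd.lintegral_comp hme]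
       simp only [homeomorphUnitSphereProd_apply_snd_coe, div_one]
  rw [h2, h3, hdim]
  rw [lintegral_prod _ hme.aemeasurable]
  simp only [lintegral_const]
  rw [mul_comm]
  congr 1
  rw [Measure.volumeIoiPow, lintegral_withDensity_eq_lintegral_mul
    (Measure.comap Subtype.val volume)
    (by fun_prop : Measurable fun r : ↥(Ioi (0:ℝ)) => ENNReal.ofReal (r.1 ^ 2))
    (g := fun r : ↥(Ioi (0:ℝ)) => f r.1) (hf.comp measurable_subtype_coe)]
  have h4 := setLIntegral_subtype (μ := (volume : Measure ℝ)) (s := Ioi (0:ℝ))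
    measurableSet_Ioi univ (fun r => ENNReal.ofReal (r ^ 2) * f r)
  simp only [Measure.restrict_univ, image_univ, Subtype.range_coe_subtype,
    Set.setOf_mem_eq] at h4
  simp only [Pi.mul_apply]
  exact h4

/-- the uniform constant of the dual bound -/
def schurC : ℝ≥0∞ := (volume : Measure E3).toSphere univ * ENNReal.ofReal (2 * π)

lemma schurC_ne_top : schurC ≠ ⊤ :=
  ENNReal.mul_ne_top (measure_ne_top _ _) ENNReal.ofReal_ne_top

lemma schurKer_meas1 (t : ℝ) : Measurable fun s : ℝ => ENNReal.ofReal (schurKer s t) := by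
  have h : Measurable fun s : ℝ => (s, t) := measurable_id.prodMk measurable_const
  exact ENNReal.measurable_ofReal.comp (schurKer_meas2.comp h)

/-- The key dual estimate: the `k`-integral is bounded uniformly in `t ≥ 0`. -/
lemma schur_lintegral_le {t : ℝ} (ht : 0 ≤ t) :
    ∫⁻ (k : E3), ENNReal.ofReal (schurKer ‖k‖ t) ≤ schurC := by
  rw [lintegral_norm_E3 _ (schurKer_meas1 t)]
  unfold schurC
  refine mul_le_mul_right ?_ _
  have hint : Integrable (fun r : ℝ => 2 * (1 + (r - t) ^ 2)⁻¹) :=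
    (integrable_inv_one_add_sq.comp_sub_right t).const_mul 2
  calc ∫⁻ r in Ioi (0:ℝ), ENNReal.ofReal (r ^ 2) * ENNReal.ofReal (schurKer r t)
      ≤ ∫⁻ r in Ioi (0:ℝ), ENNReal.ofReal (2 * (1 + (r - t) ^ 2)⁻¹) := by
        refine setLIntegral_mono (by fun_prop) ?_
        intro r hr
        rw [← ENNReal.ofReal_mul (by positivity)]
        refine ENNReal.ofReal_le_ofReal ?_
        have := schurKer_pointwise hr ht
        rw [div_eq_mul_inv] at this
        linarith
    _ ≤ ∫⁻ r : ℝ, ENNReal.ofReal (2 * (1 + (r - t) ^ 2)⁻¹) :=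
        setLIntegral_le_lintegral _ _
    _ = ENNReal.ofReal (∫ r : ℝ, 2 * (1 + (r - t) ^ 2)⁻¹) :=
        (ofReal_integral_eq_lintegral_ofReal hint
          (Filter.Eventually.of_forall fun r => by positivity)).symm
    _ = ENNReal.ofReal (2 * π) := by
        rw [show (fun r : ℝ => 2 * (1 + (r - t) ^ 2)⁻¹)
            = (fun u : ℝ => 2 * (1 + u ^ 2)⁻¹) ∘ (fun r => r - t) from rfl]
        rw [show ∫ r : ℝ, ((fun u : ℝ => 2 * (1 + u ^ 2)⁻¹) ∘ (fun r => r - t)) r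
            = ∫ u : ℝ, 2 * (1 + u ^ 2)⁻¹ from
          integral_sub_right_eq_self (fun u : ℝ => 2 * (1 + u ^ 2)⁻¹) t]
        rw [MeasureTheory.integral_const_mul, integral_univ_inv_one_add_sq]

set_option maxHeartbeats 1000000 in
theorem schur_aux (W₁ W₂ ψ : E3 → ℝ)
    (hW₁m : Measurable W₁) (hW₂m : Measurable W₂) (hψm : Measurable ψ)
    (hW₁ : ∀ v, 0 ≤ W₁ v) (hW₂ : ∀ v, 0 ≤ W₂ v)
    (hW₁i : Integrable W₁) (hW₂i : Integrable W₂) (hψi : Integrable ψ) :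
    (∫ (x : E3), |∫ (y : E3), (∫ (k : E3), ∫ (z : E3),
        W₁ (x - k) * W₂ z * schurKer ‖k‖ ‖z - y‖) * ψ y|)
      ≤ (schurC.toReal + 1) * (∫ (η : E3), W₁ η) * (∫ (z : E3), W₂ z)
        * (∫ (y : E3), |ψ y|) := by
  set a : E3 → ℝ≥0∞ := fun v => ENNReal.ofReal (W₁ v) with ha_def
  set b : E3 → ℝ≥0∞ := fun v => ENNReal.ofReal (W₂ v) with hb_def
  set q : E3 → ℝ≥0∞ := fun v => ENNReal.ofReal |ψ v| with hq_def
  set N : E3 → E3 → ℝ≥0∞ := fun k w => ENNReal.ofReal (schurKer ‖k‖ ‖w‖) with hN_def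
  have ha : Measurable a := ENNReal.measurable_ofReal.comp hW₁m
  have hb : Measurable b := ENNReal.measurable_ofReal.comp hW₂m
  have hq : Measurable q := ENNReal.measurable_ofReal.comp hψm.abs
  have hN : Measurable fun p : E3 × E3 => N p.1 p.2 := by
    have h : Measurable fun p : E3 × E3 => (‖p.1‖, ‖p.2‖) :=
      (measurable_norm.comp measurable_fst).prodMk (measurable_norm.comp measurable_snd)
    exact ENNReal.measurable_ofReal.comp (schurKer_meas2.comp h)
  set Tin : E3 → E3 → ℝ≥0∞ := fun x y => ∫⁻ (k : E3), ∫⁻ (z : E3),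
      a (x - k) * b z * N k (z - y) with hTin_def
  set L : E3 → ℝ≥0∞ := fun x => ∫⁻ (y : E3), Tin x y * q y with hL_def
  -- measurability stack
  have hab : Measurable fun p : ((E3 × E3) × E3) × E3 =>
      a (p.1.1.1 - p.1.2) * b p.2 * N p.1.2 (p.2 - p.1.1.2) := by
    fun_prop
  have hJ : Measurable fun p : (E3 × E3) × E3 =>
      ∫⁻ (z : E3), a (p.1.1 - p.2) * b z * N p.2 (z - p.1.2) :=
    hab.lintegral_prod_right'
  have hTinm : Measurable fun p : E3 × E3 => Tin p.1 p.2 := hJ.lintegral_prod_right'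
  have hLcore : Measurable fun p : E3 × E3 => Tin p.1 p.2 * q p.2 :=
    hTinm.mul (hq.comp measurable_snd)
  have hL : Measurable L := hLcore.lintegral_prod_right'
  -- finite basic integrals
  have hI1 : (∫⁻ (v : E3), a v) = ENNReal.ofReal (∫ (v : E3), W₁ v) :=
    (ofReal_integral_eq_lintegral_ofReal hW₁i (Filter.Eventually.of_forall hW₁)).symm
  have hI2 : (∫⁻ (v : E3), b v) = ENNReal.ofReal (∫ (v : E3), W₂ v) :=
    (ofReal_integral_eq_lintegral_ofReal hW₂i (Filter.Eventually.of_forall hW₂)).symm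
  have hIq : (∫⁻ (v : E3), q v) = ENNReal.ofReal (∫ (v : E3), |ψ v|) :=
    (ofReal_integral_eq_lintegral_ofReal hψi.abs
      (Filter.Eventually.of_forall fun v => abs_nonneg _)).symm
  set I1 := ∫⁻ (v : E3), a v with hI1_def
  set I2 := ∫⁻ (v : E3), b v with hI2_def
  set Iq := ∫⁻ (v : E3), q v with hIq_def
  have hI1t : I1 ≠ ⊤ := by rw [hI1]; exact ENNReal.ofReal_ne_top
  have hI2t : I2 ≠ ⊤ := by rw [hI2]; exact ENNReal.ofReal_ne_top
  have hIqt : Iq ≠ ⊤ := by rw [hIq]; exact ENNReal.ofReal_ne_top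
  -- the dual-side bound for fixed y
  have hIbound : ∀ y : E3, (∫⁻ (x : E3), Tin x y) ≤ I1 * schurC * I2 := by
    intro y
    calc ∫⁻ (x : E3), Tin x y
        = ∫⁻ (k : E3), ∫⁻ (x : E3), ∫⁻ (z : E3), a (x - k) * b z * N k (z - y) := by
          refine lintegral_lintegral_swap ?_
          refine Measurable.aemeasurable ?_
          refine Measurable.lintegral_prod_right' (f := fun (p : (E3 × E3) × E3) =>
            a (p.1.1 - p.1.2) * b p.2 * N p.1.2 (p.2 - y)) ?_
          fun_prop
      _ = ∫⁻ (k : E3), ∫⁻ (z : E3), ∫⁻ (x : E3), a (x - k) * b z * N k (z - y) := by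
          refine lintegral_congr fun k => lintegral_lintegral_swap ?_
          refine Measurable.aemeasurable ?_
          fun_prop
      _ = ∫⁻ (k : E3), ∫⁻ (z : E3), I1 * (b z * N k (z - y)) := by
          refine lintegral_congr fun k => lintegral_congr fun z => ?_
          simp only [mul_assoc]
          rw [lintegral_mul_const' _ _
            (ENNReal.mul_ne_top ENNReal.ofReal_ne_top ENNReal.ofReal_ne_top)]
          rw [lintegral_sub_right_eq_self a k]
      _ = ∫⁻ (z : E3), ∫⁻ (k : E3), I1 * (b z * N k (z - y)) := by
          refine lintegral_lintegral_swap ?_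
          refine Measurable.aemeasurable ?_
          fun_prop
      _ = ∫⁻ (z : E3), (I1 * b z) * ∫⁻ (k : E3), N k (z - y) := by
          refine lintegral_congr fun z => ?_
          rw [← lintegral_const_mul' _ _
            (ENNReal.mul_ne_top hI1t ENNReal.ofReal_ne_top)]
          refine lintegral_congr fun k => by ring
      _ ≤ ∫⁻ (z : E3), (I1 * b z) * schurC :=
          lintegral_mono fun z => mul_le_mul_right (schur_lintegral_le (norm_nonneg _)) _
      _ = I1 * schurC * I2 := by
          have : ∀ z : E3, (I1 * b z) * schurC = (I1 * schurC) * b z := fun z => by ring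
          simp only [this]
          rw [lintegral_const_mul' _ _ (ENNReal.mul_ne_top hI1t schurC_ne_top)]
  -- total lintegral bound
  have hLle : (∫⁻ (x : E3), L x) ≤ I1 * schurC * I2 * Iq := by
    calc ∫⁻ (x : E3), L x
        = ∫⁻ (y : E3), ∫⁻ (x : E3), Tin x y * q y :=
          lintegral_lintegral_swap hLcore.aemeasurable
      _ = ∫⁻ (y : E3), (∫⁻ (x : E3), Tin x y) * q y := by
          refine lintegral_congr fun y => lintegral_mul_const' _ _ ENNReal.ofReal_ne_top
      _ ≤ ∫⁻ (y : E3), (I1 * schurC * I2) * q y :=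
          lintegral_mono fun y => mul_le_mul_left (hIbound y) _
      _ = I1 * schurC * I2 * Iq :=
          lintegral_const_mul' _ _
            (ENNReal.mul_ne_top (ENNReal.mul_ne_top hI1t schurC_ne_top) hI2t)
  have hRt : I1 * schurC * I2 * Iq ≠ ⊤ :=
    ENNReal.mul_ne_top (ENNReal.mul_ne_top (ENNReal.mul_ne_top hI1t schurC_ne_top) hI2t) hIqt
  have hfin : (∫⁻ (x : E3), L x) ≠ ⊤ := fun h => hRt (top_le_iff.mp (h ▸ hLle))
  have haefin : ∀ᵐ (x : E3) ∂volume, L x < ⊤ := ae_lt_top hL hfin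
  -- pointwise bound |∫ y ...| ≤ (L x).toReal
  have claim1 : ∀ x y : E3, ENNReal.ofReal
      ‖(∫ (k : E3), ∫ (z : E3), W₁ (x - k) * W₂ z * schurKer ‖k‖ ‖z - y‖) * ψ y‖
      ≤ Tin x y * q y := by
    intro x y
    have h0 : ∀ k z : E3, (0:ℝ) ≤ W₁ (x - k) * W₂ z * schurKer ‖k‖ ‖z - y‖ :=
      fun k z => mul_nonneg (mul_nonneg (hW₁ _) (hW₂ _)) (schurKer_nonneg (norm_nonneg _) _)
    rw [norm_mul, ENNReal.ofReal_mul (norm_nonneg _)]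
    have hq' : ENNReal.ofReal ‖ψ y‖ = q y := by rw [Real.norm_eq_abs]
    rw [hq']
    refine mul_le_mul_left ?_ _
    calc ENNReal.ofReal ‖∫ (k : E3), ∫ (z : E3), W₁ (x - k) * W₂ z * schurKer ‖k‖ ‖z - y‖‖
        = ↑‖∫ (k : E3), ∫ (z : E3), W₁ (x - k) * W₂ z * schurKer ‖k‖ ‖z - y‖‖₊ :=
          ofReal_norm _
      _ ≤ ∫⁻ (k : E3), ↑‖∫ (z : E3), W₁ (x - k) * W₂ z * schurKer ‖k‖ ‖z - y‖‖₊ :=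
          enorm_integral_le_lintegral_enorm _
      _ ≤ ∫⁻ (k : E3), ∫⁻ (z : E3), ↑‖W₁ (x - k) * W₂ z * schurKer ‖k‖ ‖z - y‖‖₊ :=
          lintegral_mono fun k => enorm_integral_le_lintegral_enorm _
      _ = Tin x y := by
          refine lintegral_congr fun k => lintegral_congr fun z => ?_
          rw [← enorm_eq_nnnorm, ← ofReal_norm, Real.norm_eq_abs, abs_of_nonneg (h0 k z),
            ENNReal.ofReal_mul (mul_nonneg (hW₁ _) (hW₂ _)), ENNReal.ofReal_mul (hW₁ _)]
  have habs : ∀ᵐ (x : E3) ∂volume,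
      |∫ (y : E3), (∫ (k : E3), ∫ (z : E3), W₁ (x - k) * W₂ z * schurKer ‖k‖ ‖z - y‖) * ψ y|
        ≤ (L x).toReal := by
    filter_upwards [haefin] with x hx
    rw [← Real.norm_eq_abs]
    refine le_trans (norm_integral_le_lintegral_norm _) ?_
    exact ENNReal.toReal_mono hx.ne (lintegral_mono (claim1 x))
  have hΦi : Integrable (fun x : E3 => (L x).toReal) :=
    integrable_toReal_of_lintegral_ne_top hL.aemeasurable hfin
  calc ∫ (x : E3), |∫ (y : E3), (∫ (k : E3), ∫ (z : E3),
          W₁ (x - k) * W₂ z * schurKer ‖k‖ ‖z - y‖) * ψ y|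
      ≤ ∫ (x : E3), (L x).toReal :=
        integral_mono_of_nonneg (Filter.Eventually.of_forall fun x => abs_nonneg _) hΦi habs
    _ = (∫⁻ (x : E3), L x).toReal := integral_toReal hL.aemeasurable haefin
    _ ≤ (I1 * schurC * I2 * Iq).toReal := ENNReal.toReal_mono hRt hLle
    _ ≤ (schurC.toReal + 1) * (∫ (η : E3), W₁ η) * (∫ (z : E3), W₂ z)
        * (∫ (y : E3), |ψ y|) := by
        rw [ENNReal.toReal_mul, ENNReal.toReal_mul, ENNReal.toReal_mul, hI1, hI2, hIq,
          ENNReal.toReal_ofReal (integral_nonneg hW₁),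
          ENNReal.toReal_ofReal (integral_nonneg hW₂),
          ENNReal.toReal_ofReal (integral_nonneg fun v => abs_nonneg _)]
        have h1 : (0:ℝ) ≤ ∫ (η : E3), W₁ η := integral_nonneg hW₁
        have h2 : (0:ℝ) ≤ ∫ (z : E3), W₂ z := integral_nonneg hW₂
        have h3 : (0:ℝ) ≤ ∫ (y : E3), |ψ y| := integral_nonneg fun v => abs_nonneg _
        have hc : (0:ℝ) ≤ schurC.toReal := ENNReal.toReal_nonneg
        nlinarith [mul_nonneg (mul_nonneg h1 h2) h3, mul_nonneg h1 h2]

end SchurAux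

end SchurAuxSection

open SchurAux in
/-- Schur-type kernel bound, `L¹` side: with the same kernel
`K(x,y) = ∫∫ W₁(x−k) W₂(z) (⟨k⟩/|k|) χ(|k|+|z−y|>1)/((|k|+|z−y|)²⟨|k|−|z−y|⟩²) dz dk`,
the operator `Tψ(x) = ∫ K(x,y)ψ(y) dy` satisfies
`‖Tψ‖_{L¹} ≤ C (‖W₁‖_𝒦 + ‖W₁‖_{L¹}) ‖W₂‖_{L¹} ‖ψ‖_{L¹}`. -/
theorem schur_kernel_L1_bound :
    ∃ C : ℝ, 0 < C ∧
      ∀ (W₁ W₂ : EuclideanSpace ℝ (Fin 3) → ℝ),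
        (∀ η, 0 ≤ W₁ η) → (∀ z, 0 ≤ W₂ z) →
        Integrable W₁ → Integrable W₂ →
        Integrable (fun η : EuclideanSpace ℝ (Fin 3) =>
          W₁ η * Real.sqrt (1 + ‖η‖ ^ 2) / ‖η‖) →
        ∀ ψ : EuclideanSpace ℝ (Fin 3) → ℝ, Integrable ψ →
          (∫ x : EuclideanSpace ℝ (Fin 3),
              |∫ y : EuclideanSpace ℝ (Fin 3),
                (∫ k : EuclideanSpace ℝ (Fin 3), ∫ z : EuclideanSpace ℝ (Fin 3),
                  W₁ (x - k) * W₂ z * (Real.sqrt (1 + ‖k‖ ^ 2) / ‖k‖) *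
                    (if 1 < ‖k‖ + ‖z - y‖ then
                      1 / ((‖k‖ + ‖z - y‖) ^ 2 * (1 + (‖k‖ - ‖z - y‖) ^ 2)) else 0))
                  * ψ y|)
            ≤ C * ((∫ η : EuclideanSpace ℝ (Fin 3),
                      W₁ η * Real.sqrt (1 + ‖η‖ ^ 2) / ‖η‖)
                    + ∫ η : EuclideanSpace ℝ (Fin 3), W₁ η)
                * (∫ z : EuclideanSpace ℝ (Fin 3), W₂ z)
                * (∫ y : EuclideanSpace ℝ (Fin 3), |ψ y|) := by
  refine ⟨schurC.toReal + 1, by positivity, ?_⟩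
  intro W₁ W₂ hW₁0 hW₂0 hW₁i hW₂i hW₁K ψ hψi
  -- measurable representatives
  obtain ⟨W₁', hW₁'m, hW₁'ae⟩ : ∃ g : EuclideanSpace ℝ (Fin 3) → ℝ,
      Measurable g ∧ W₁ =ᵐ[volume] g :=
    ⟨hW₁i.aemeasurable.mk W₁, hW₁i.aemeasurable.measurable_mk, hW₁i.aemeasurable.ae_eq_mk⟩
  obtain ⟨W₂', hW₂'m, hW₂'ae⟩ : ∃ g : EuclideanSpace ℝ (Fin 3) → ℝ,
      Measurable g ∧ W₂ =ᵐ[volume] g :=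
    ⟨hW₂i.aemeasurable.mk W₂, hW₂i.aemeasurable.measurable_mk, hW₂i.aemeasurable.ae_eq_mk⟩
  obtain ⟨ψ', hψ'm, hψ'ae⟩ : ∃ g : EuclideanSpace ℝ (Fin 3) → ℝ,
      Measurable g ∧ ψ =ᵐ[volume] g :=
    ⟨hψi.aemeasurable.mk ψ, hψi.aemeasurable.measurable_mk, hψi.aemeasurable.ae_eq_mk⟩
  -- make the representatives pointwise nonnegative
  set W₁'' : EuclideanSpace ℝ (Fin 3) → ℝ := fun v => max (W₁' v) 0 with hW₁''_def
  set W₂'' : EuclideanSpace ℝ (Fin 3) → ℝ := fun v => max (W₂' v) 0 with hW₂''_def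
  have hW₁''m : Measurable W₁'' := hW₁'m.max measurable_const
  have hW₂''m : Measurable W₂'' := hW₂'m.max measurable_const
  have hW₁''0 : ∀ v, 0 ≤ W₁'' v := fun v => le_max_right _ _
  have hW₂''0 : ∀ v, 0 ≤ W₂'' v := fun v => le_max_right _ _
  have hW₁''ae : W₁ =ᵐ[volume] W₁'' := by
    filter_upwards [hW₁'ae] with v hv
    rw [hW₁''_def]
    simp only [← hv, max_eq_left (hW₁0 v)]
  have hW₂''ae : W₂ =ᵐ[volume] W₂'' := by
    filter_upwards [hW₂'ae] with v hv
    rw [hW₂''_def]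
    simp only [← hv, max_eq_left (hW₂0 v)]
  have hW₁''i : Integrable W₁'' := hW₁i.congr hW₁''ae
  have hW₂''i : Integrable W₂'' := hW₂i.congr hW₂''ae
  have hψ'i : Integrable ψ' := hψi.congr hψ'ae
  -- rewrite the kernel in terms of `schurKer`
  have hker : ∀ (u v : EuclideanSpace ℝ (Fin 3) → ℝ) (x y k z : EuclideanSpace ℝ (Fin 3)),
      u (x - k) * v z * (Real.sqrt (1 + ‖k‖ ^ 2) / ‖k‖) *
        (if 1 < ‖k‖ + ‖z - y‖ then
          1 / ((‖k‖ + ‖z - y‖) ^ 2 * (1 + (‖k‖ - ‖z - y‖) ^ 2)) else 0)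
      = u (x - k) * v z * schurKer ‖k‖ ‖z - y‖ := by
    intro u v x y k z
    unfold schurKer
    ring
  simp only [hker]
  -- replace `W₁ W₂ ψ` by their measurable representatives in the left-hand side
  have hk : ∀ x : EuclideanSpace ℝ (Fin 3),
      (fun k => W₁ (x - k)) =ᵐ[volume] (fun k => W₁'' (x - k)) := fun x =>
    (Measure.measurePreserving_sub_left volume x).quasiMeasurePreserving.ae_eq_comp hW₁''ae
  have hAB : ∀ x y : EuclideanSpace ℝ (Fin 3),
      (∫ k : EuclideanSpace ℝ (Fin 3), ∫ z : EuclideanSpace ℝ (Fin 3),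
        W₁ (x - k) * W₂ z * schurKer ‖k‖ ‖z - y‖)
      = (∫ k : EuclideanSpace ℝ (Fin 3), ∫ z : EuclideanSpace ℝ (Fin 3),
        W₁'' (x - k) * W₂'' z * schurKer ‖k‖ ‖z - y‖) := by
    intro x y
    refine integral_congr_ae ?_
    filter_upwards [hk x] with k hkk
    rw [show W₁ (x - k) = W₁'' (x - k) from hkk]
    exact integral_congr_ae (hW₂''ae.mono fun z hz => by dsimp only; rw [hz])
  have hstep : (∫ x : EuclideanSpace ℝ (Fin 3),
        |∫ y : EuclideanSpace ℝ (Fin 3),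
          (∫ k : EuclideanSpace ℝ (Fin 3), ∫ z : EuclideanSpace ℝ (Fin 3),
            W₁ (x - k) * W₂ z * schurKer ‖k‖ ‖z - y‖) * ψ y|)
      = (∫ x : EuclideanSpace ℝ (Fin 3),
        |∫ y : EuclideanSpace ℝ (Fin 3),
          (∫ k : EuclideanSpace ℝ (Fin 3), ∫ z : EuclideanSpace ℝ (Fin 3),
            W₁'' (x - k) * W₂'' z * schurKer ‖k‖ ‖z - y‖) * ψ' y|) := by
    simp only [hAB]
    refine integral_congr_ae (Filter.Eventually.of_forall fun x => ?_)
    have hpsi : (∫ y : EuclideanSpace ℝ (Fin 3),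
          (∫ k : EuclideanSpace ℝ (Fin 3), ∫ z : EuclideanSpace ℝ (Fin 3),
            W₁'' (x - k) * W₂'' z * schurKer ‖k‖ ‖z - y‖) * ψ y)
        = (∫ y : EuclideanSpace ℝ (Fin 3),
          (∫ k : EuclideanSpace ℝ (Fin 3), ∫ z : EuclideanSpace ℝ (Fin 3),
            W₁'' (x - k) * W₂'' z * schurKer ‖k‖ ‖z - y‖) * ψ' y) :=
      integral_congr_ae (hψ'ae.mono fun y hy => by dsimp only; rw [hy])
    dsimp only
    rw [hpsi]
  rw [hstep]
  have hbound := schur_aux W₁'' W₂'' ψ' hW₁''m hW₂''m hψ'm hW₁''0 hW₂''0 hW₁''i hW₂''i hψ'i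
  refine le_trans hbound ?_
  -- convert back the integrals on the right-hand side
  have he1 : (∫ η : EuclideanSpace ℝ (Fin 3), W₁'' η) = ∫ η : EuclideanSpace ℝ (Fin 3), W₁ η :=
    integral_congr_ae hW₁''ae.symm
  have he2 : (∫ z : EuclideanSpace ℝ (Fin 3), W₂'' z) = ∫ z : EuclideanSpace ℝ (Fin 3), W₂ z :=
    integral_congr_ae hW₂''ae.symm
  have he3 : (∫ y : EuclideanSpace ℝ (Fin 3), |ψ' y|) = ∫ y : EuclideanSpace ℝ (Fin 3), |ψ y| :=
    integral_congr_ae (hψ'ae.symm.mono fun y hy => by dsimp only; rw [hy])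
  rw [he1, he2, he3]
  -- finally use `∫ W₁ ≤ ∫ 𝒦-norm + ∫ W₁`
  have hKnn : (0:ℝ) ≤ ∫ η : EuclideanSpace ℝ (Fin 3), W₁ η * Real.sqrt (1 + ‖η‖ ^ 2) / ‖η‖ :=
    integral_nonneg fun η => div_nonneg (mul_nonneg (hW₁0 η) (Real.sqrt_nonneg _)) (norm_nonneg _)
  have h1 : (0:ℝ) ≤ ∫ z : EuclideanSpace ℝ (Fin 3), W₂ z := integral_nonneg hW₂0
  have h2 : (0:ℝ) ≤ ∫ y : EuclideanSpace ℝ (Fin 3), |ψ y| :=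
    integral_nonneg fun y => abs_nonneg _
  have hC : (0:ℝ) ≤ schurC.toReal + 1 := by positivity
  have hmain : (schurC.toReal + 1) * (∫ η : EuclideanSpace ℝ (Fin 3), W₁ η)
      ≤ (schurC.toReal + 1) * ((∫ η : EuclideanSpace ℝ (Fin 3),
            W₁ η * Real.sqrt (1 + ‖η‖ ^ 2) / ‖η‖)
          + ∫ η : EuclideanSpace ℝ (Fin 3), W₁ η) :=
    mul_le_mul_of_nonneg_left (le_add_of_nonneg_left hKnn) hC
  exact mul_le_mul_of_nonneg_right (mul_le_mul_of_nonneg_right hmain h1) h2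
end

section
/- For every k ∈ ℝ³ and every R ≥ 0, ∫_{ℝ³} (⟨ξ⟩/|ξ|) · χ(|ξ| + R > 1) / ((|ξ| + R)² ⟨|ξ| − R⟩²) dξ ≤ C for an absolute constant C (independent of R). -/
open MeasureTheory Real Metric


set_option maxHeartbeats 1000000 in
theorem key_pointwise' (R y : ℝ) (hR : 0 ≤ R) (hy : 0 < y) :
    y ^ 2 * ((Real.sqrt (1 + y ^ 2) / y) *
      (if 1 < y + R then 1 / ((y + R) ^ 2 * (1 + (y - R) ^ 2)) else 0)) ≤
    8 * ((1 + (y - R) ^ 2)⁻¹ + (1 + y ^ 2)⁻¹ + (1 + (y - 1/2) ^ 2)⁻¹) := by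
  by_cases hχ : 1 < y + R
  · rw [if_pos hχ]
    have hs : Real.sqrt (1 + y ^ 2) ≤ 1 + y := by
      rw [show (1:ℝ) + y = Real.sqrt ((1+y)^2) from (Real.sqrt_sq (by linarith)).symm]
      exact Real.sqrt_le_sqrt (by nlinarith)
    have hs0 : 0 ≤ Real.sqrt (1 + y ^ 2) := Real.sqrt_nonneg _
    have hD : 0 < (y + R) ^ 2 * (1 + (y - R) ^ 2) := by positivity
    have heq : y ^ 2 * ((Real.sqrt (1 + y ^ 2) / y) * (1 / ((y + R) ^ 2 * (1 + (y - R) ^ 2))))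
        = (y * Real.sqrt (1 + y ^ 2)) / ((y + R) ^ 2 * (1 + (y - R) ^ 2)) := by
      field_simp
    rw [heq]
    have hstep : (y * Real.sqrt (1 + y ^ 2)) / ((y + R) ^ 2 * (1 + (y - R) ^ 2))
        ≤ (y * (1 + y)) / ((y + R) ^ 2 * (1 + (y - R) ^ 2)) := by
      gcongr
    refine hstep.trans ?_
    rcases le_or_gt (1/2) R with hR2 | hR2
    · rcases le_or_gt y (2*R) with hy2 | hy2
      · -- bound by first term
        have h1 : (y * (1 + y)) / ((y + R) ^ 2 * (1 + (y - R) ^ 2)) ≤ 8 * (1 + (y - R) ^ 2)⁻¹ := by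
          rw [← div_eq_mul_inv, div_le_div_iff₀ hD (by positivity : (0:ℝ) < 1 + (y - R)^2)]
          have h2 : y * (1 + y) ≤ 8 * (y + R) ^ 2 := by nlinarith
          nlinarith [sq_nonneg (y - R), mul_le_mul_of_nonneg_right h2 (by positivity : (0:ℝ) ≤ (1 + (y-R)^2))]
        have h3 : (0:ℝ) ≤ 8 * (1 + y ^ 2)⁻¹ := by positivity
        have h4 : (0:ℝ) ≤ 8 * (1 + (y - 1/2) ^ 2)⁻¹ := by positivity
        nlinarith [h1]
      · -- y ≥ 2R, y ≥ 1 : bound by second term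
        have hy1 : 1 ≤ y := by linarith
        have h1 : (y * (1 + y)) / ((y + R) ^ 2 * (1 + (y - R) ^ 2)) ≤ 8 * (1 + y ^ 2)⁻¹ := by
          rw [← div_eq_mul_inv, div_le_div_iff₀ hD (by positivity : (0:ℝ) < 1 + y^2)]
          have hA : y^2 ≤ (y+R)^2 := by nlinarith
          have hB : y^2 ≤ 4*(y-R)^2 := by nlinarith
          have hC : y^2*(1 + y^2/4) ≤ (y+R)^2*(1+(y-R)^2) :=
            mul_le_mul hA (by linarith) (by positivity) (by positivity)
          have hy3 : y ≤ y^2 := by nlinarith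
          have hy4 : y^3 ≤ y^4 := by nlinarith
          nlinarith [hC, hy3, hy4]
        have h3 : (0:ℝ) ≤ 8 * (1 + (y - R) ^ 2)⁻¹ := by positivity
        have h4 : (0:ℝ) ≤ 8 * (1 + (y - 1/2) ^ 2)⁻¹ := by positivity
        nlinarith [h1]
    · -- R < 1/2, so y > 1/2 : bound by third term
      have hy2 : 1/2 < y := by linarith
      have h1 : (y * (1 + y)) / ((y + R) ^ 2 * (1 + (y - R) ^ 2)) ≤ 8 * (1 + (y - 1/2) ^ 2)⁻¹ := by
        rw [← div_eq_mul_inv, div_le_div_iff₀ hD (by positivity : (0:ℝ) < 1 + (y - 1/2)^2)]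
        have hyR : y - 1/2 ≤ y - R := by linarith
        have h5 : 1 + (y - 1/2)^2 ≤ 1 + (y - R)^2 := by nlinarith
        have h2 : y * (1 + y) ≤ 8 * y ^ 2 := by nlinarith
        have h6 : y^2 ≤ (y + R)^2 := by nlinarith
        have hm1 := mul_le_mul_of_nonneg_right h2 (by positivity : (0:ℝ) ≤ (1 + (y-1/2)^2))
        have hm2 := mul_le_mul h6 h5 (by positivity) (by positivity)
        nlinarith [hm1, hm2]
      have h3 : (0:ℝ) ≤ 8 * (1 + (y - R) ^ 2)⁻¹ := by positivity
      have h4 : (0:ℝ) ≤ 8 * (1 + y ^ 2)⁻¹ := by positivity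
      nlinarith [h1]
  · rw [if_neg hχ]; rw [mul_zero, mul_zero]; positivity

/-- Uniform bound: for every `R ≥ 0`,
`∫_{ℝ³} (⟨ξ⟩/|ξ|) χ(|ξ|+R>1)/((|ξ|+R)² ⟨|ξ|−R⟩²) dξ ≤ C` with an absolute constant `C`. -/
theorem integral_weighted_far_kernel_uniform_bound :
    ∃ C : ℝ, 0 < C ∧ ∀ R : ℝ, 0 ≤ R →
      (∫ ξ : EuclideanSpace ℝ (Fin 3),
          (Real.sqrt (1 + ‖ξ‖ ^ 2) / ‖ξ‖) *
            (if 1 < ‖ξ‖ + R then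
              1 / ((‖ξ‖ + R) ^ 2 * (1 + (‖ξ‖ - R) ^ 2)) else 0)) ≤ C := by
  set c : ℝ := (volume (Metric.ball (0 : EuclideanSpace ℝ (Fin 3)) 1)).toReal with hc
  have hc0 : 0 ≤ c := ENNReal.toReal_nonneg
  refine ⟨3 * c * (24 * π) + 1, by positivity, fun R hR => ?_⟩
  have hpolar := MeasureTheory.integral_fun_norm_addHaar (volume : Measure (EuclideanSpace ℝ (Fin 3)))
    (fun y => (Real.sqrt (1 + y ^ 2) / y) *
      (if 1 < y + R then 1 / ((y + R) ^ 2 * (1 + (y - R) ^ 2)) else 0))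
  rw [hpolar]
  simp only [finrank_euclideanSpace, Fintype.card_fin, smul_eq_mul, nsmul_eq_mul,
    show (3:ℕ) - 1 = 2 from rfl]
  -- now bound the radial integral
  have hInt : Integrable (fun y : ℝ =>
      8 * ((1 + (y - R) ^ 2)⁻¹ + (1 + y ^ 2)⁻¹ + (1 + (y - 1/2) ^ 2)⁻¹)) :=
    (((integrable_inv_one_add_sq.comp_sub_right R).add integrable_inv_one_add_sq).add
      (integrable_inv_one_add_sq.comp_sub_right (1/2))).const_mul 8
  have hval : (∫ y : ℝ, 8 * ((1 + (y - R) ^ 2)⁻¹ + (1 + y ^ 2)⁻¹ + (1 + (y - 1/2) ^ 2)⁻¹))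
      = 24 * π := by
    rw [integral_const_mul]
    have hA : (∫ x : ℝ, (1 + (x - R) ^ 2)⁻¹) = π :=
      (integral_sub_right_eq_self (fun x : ℝ => (1 + x ^ 2)⁻¹) R).trans integral_univ_inv_one_add_sq
    have hC : (∫ x : ℝ, (1 + (x - 1/2) ^ 2)⁻¹) = π :=
      (integral_sub_right_eq_self (fun x : ℝ => (1 + x ^ 2)⁻¹) (1/2)).trans integral_univ_inv_one_add_sq
    have e1 : (∫ a : ℝ, ((1 + (a - R) ^ 2)⁻¹ + (1 + a ^ 2)⁻¹ + (1 + (a - 1/2) ^ 2)⁻¹)) =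
        (∫ a : ℝ, ((1 + (a - R) ^ 2)⁻¹ + (1 + a ^ 2)⁻¹)) + ∫ a : ℝ, (1 + (a - 1/2) ^ 2)⁻¹ :=
      integral_add ((integrable_inv_one_add_sq.comp_sub_right R).add integrable_inv_one_add_sq)
        (integrable_inv_one_add_sq.comp_sub_right (1/2))
    have e2 : (∫ a : ℝ, ((1 + (a - R) ^ 2)⁻¹ + (1 + a ^ 2)⁻¹)) =
        (∫ a : ℝ, (1 + (a - R) ^ 2)⁻¹) + ∫ a : ℝ, (1 + a ^ 2)⁻¹ :=
      integral_add (integrable_inv_one_add_sq.comp_sub_right R) integrable_inv_one_add_sq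
    rw [e1, e2, hA, hC, integral_univ_inv_one_add_sq]
    ring
  have hmono : (∫ y in Set.Ioi (0:ℝ), y ^ 2 *
      ((Real.sqrt (1 + y ^ 2) / y) *
        (if 1 < y + R then 1 / ((y + R) ^ 2 * (1 + (y - R) ^ 2)) else 0))) ≤ 24 * π := by
    have step1 : (∫ y in Set.Ioi (0:ℝ), y ^ 2 *
        ((Real.sqrt (1 + y ^ 2) / y) *
          (if 1 < y + R then 1 / ((y + R) ^ 2 * (1 + (y - R) ^ 2)) else 0))) ≤
        ∫ y in Set.Ioi (0:ℝ), 8 * ((1 + (y - R) ^ 2)⁻¹ + (1 + y ^ 2)⁻¹ + (1 + (y - 1/2) ^ 2)⁻¹) := by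
      refine integral_mono_of_nonneg ?_ hInt.restrict ?_
      · refine (ae_restrict_iff' measurableSet_Ioi).2 (ae_of_all _ fun y hy => ?_)
        have hy0 : (0:ℝ) < y := hy
        refine mul_nonneg (by positivity) (mul_nonneg (by positivity) ?_)
        split_ifs with h
        · positivity
        · exact le_rfl
      · refine (ae_restrict_iff' measurableSet_Ioi).2 (ae_of_all _ fun y hy => ?_)
        exact key_pointwise' R y hR hy
    have step2 : (∫ y in Set.Ioi (0:ℝ),
        8 * ((1 + (y - R) ^ 2)⁻¹ + (1 + y ^ 2)⁻¹ + (1 + (y - 1/2) ^ 2)⁻¹)) ≤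
        ∫ y : ℝ, 8 * ((1 + (y - R) ^ 2)⁻¹ + (1 + y ^ 2)⁻¹ + (1 + (y - 1/2) ^ 2)⁻¹) :=
      setIntegral_le_integral hInt (ae_of_all _ fun y => by positivity)
    linarith [hval ▸ step2, step1]
  rw [show volume.real (Metric.ball (0 : EuclideanSpace ℝ (Fin 3)) 1) = c from rfl]
  nlinarith [hmono, hc0, pi_pos, mul_le_mul_of_nonneg_left hmono hc0]
end

section
/- Hölder-based y-integration bound: for p ∈ (1, ∞) with conjugate exponent p', for every fixed η, z ∈ ℝ³ and ψ ∈ L^p(ℝ³), ∫_{ℝ³} χ(|x−η|+|z−y|>1)/((|x−η|+|z−y|)² ⟨|x−η|−|z−y|⟩) |ψ(y)| dy ≤ C_p ‖ψ‖_{L^p}, where C_p depends only on p (uniform in x, η, z), because the kernel y ↦ χ(R+|z−y|>1)/((R+|z−y|)²⟨R−|z−y|⟩) belongs to L^{p'}(ℝ³) with norm bounded uniformly in R := |x−η| ≥ 0 and z. -/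
open MeasureTheory Real
open scoped ENNReal NNReal

local notation "E3" => EuclideanSpace ℝ (Fin 3)

private lemma polar_le (g : ℝ → ℝ≥0∞) (hg : Measurable g) :
    ∫⁻ x : EuclideanSpace ℝ (Fin 3), g ‖x‖ ≤
      (volume : Measure (EuclideanSpace ℝ (Fin 3))).toSphere Set.univ *
        ∫⁻ r in Set.Ioi (0 : ℝ), ENNReal.ofReal (r ^ 2) * g r := by
  classical
  have hdim : Module.finrank ℝ E3 - 1 = 2 := by
    rw [finrank_euclideanSpace_fin]
  have hmeas : Measurable fun p : Metric.sphere (0:E3) 1 × Set.Ioi (0:ℝ) => g (p.2 : ℝ) :=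
    hg.comp (measurable_subtype_coe.comp measurable_snd)
  have hstep := (Measure.measurePreserving_homeomorphUnitSphereProd
      (volume : Measure E3)).lintegral_comp
      (f := fun p : Metric.sphere (0:E3) 1 × Set.Ioi (0:ℝ) => g (p.2 : ℝ)) hmeas
  simp only [homeomorphUnitSphereProd_apply_snd_coe] at hstep
  have h1 : ∫⁻ x : E3, g ‖x‖ ∂volume
      = ∫⁻ x : ({0}ᶜ : Set E3), g ‖(x : E3)‖ ∂((volume : Measure E3).comap Subtype.val) := by
    rw [lintegral_subtype_comap (measurableSet_singleton (0:E3)).compl (fun x : E3 => g ‖x‖),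
      restrict_compl_singleton]
  have h2 : ∫⁻ p : Metric.sphere (0:E3) 1 × Set.Ioi (0:ℝ), g (p.2 : ℝ)
        ∂((volume : Measure E3).toSphere.prod (Measure.volumeIoiPow (Module.finrank ℝ E3 - 1)))
      = (volume : Measure E3).toSphere Set.univ *
          ∫⁻ r : Set.Ioi (0:ℝ), g (r : ℝ) ∂(Measure.volumeIoiPow (Module.finrank ℝ E3 - 1)) := by
    rw [lintegral_prod _ hmeas.aemeasurable]
    simp [lintegral_const, mul_comm]
  have h3 : ∫⁻ r : Set.Ioi (0:ℝ), g (r : ℝ) ∂(Measure.volumeIoiPow (Module.finrank ℝ E3 - 1))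
      = ∫⁻ r in Set.Ioi (0:ℝ), ENNReal.ofReal (r ^ 2) * g r ∂volume := by
    rw [Measure.volumeIoiPow,
      lintegral_withDensity_eq_lintegral_mul _
        ((measurable_subtype_coe.pow_const _).ennreal_ofReal)
        (show Measurable fun r : Set.Ioi (0:ℝ) => g ↑r from hg.comp measurable_subtype_coe)]
    simp only [Pi.mul_apply, hdim]
    exact lintegral_subtype_comap measurableSet_Ioi
      (fun a : ℝ => ENNReal.ofReal (a ^ 2) * g a)
  refine le_of_eq ?_
  calc ∫⁻ x : E3, g ‖x‖ ∂volume
      = ∫⁻ x : ({0}ᶜ : Set E3), g ‖(x : E3)‖ ∂((volume : Measure E3).comap Subtype.val) := h1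
    _ = ∫⁻ p : Metric.sphere (0:E3) 1 × Set.Ioi (0:ℝ), g (p.2 : ℝ)
        ∂((volume : Measure E3).toSphere.prod (Measure.volumeIoiPow (Module.finrank ℝ E3 - 1))) :=
        hstep
    _ = (volume : Measure E3).toSphere Set.univ *
          ∫⁻ r in Set.Ioi (0:ℝ), ENNReal.ofReal (r ^ 2) * g r ∂volume := by rw [h2, h3]

private lemma pointwise_radial_bound {q R r : ℝ} (hq : 1 ≤ q) (hR : 0 ≤ R) (hr : 0 ≤ r) :
    r ^ 2 * (if 1 < R + r then
        1 / ((R + r) ^ 2 * Real.sqrt (1 + (R - r) ^ 2)) else 0) ^ q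
      ≤ (1 + (R - r) ^ 2) ^ (-q / 2) := by
  have hq0 : 0 < q := lt_of_lt_of_le zero_lt_one hq
  have hbase : (0:ℝ) < 1 + (R - r) ^ 2 := by positivity
  by_cases h : 1 < R + r
  · simp only [h, if_true]
    set a : ℝ := (R + r) ^ 2 with ha
    set b : ℝ := Real.sqrt (1 + (R - r) ^ 2) with hb
    have ha1 : (1:ℝ) ≤ a := by nlinarith
    have ha0 : (0:ℝ) < a := lt_of_lt_of_le zero_lt_one ha1
    have hb0 : (0:ℝ) < b := Real.sqrt_pos.mpr hbase
    have hrpow : (1 / (a * b)) ^ q = a ^ (-q) * b ^ (-q) := by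
      rw [one_div, Real.inv_rpow (by positivity), ← Real.rpow_neg (by positivity),
        Real.mul_rpow ha0.le hb0.le]
    rw [hrpow]
    have hr2a : r ^ 2 ≤ a := by nlinarith
    have key : r ^ 2 * (a ^ (-q) * b ^ (-q)) ≤ b ^ (-q) := by
      have h1 : r ^ 2 * a ^ (-q) ≤ 1 := by
        calc r ^ 2 * a ^ (-q) ≤ a * a ^ (-q) := by
              apply mul_le_mul_of_nonneg_right hr2a (Real.rpow_nonneg ha0.le _)
          _ = a ^ (1 + -q) := by
              rw [Real.rpow_add ha0, Real.rpow_one]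
          _ ≤ 1 := Real.rpow_le_one_of_one_le_of_nonpos ha1 (by linarith)
      calc r ^ 2 * (a ^ (-q) * b ^ (-q)) = (r ^ 2 * a ^ (-q)) * b ^ (-q) := by ring
        _ ≤ 1 * b ^ (-q) :=
            mul_le_mul_of_nonneg_right h1 (Real.rpow_nonneg hb0.le _)
        _ = b ^ (-q) := one_mul _
    refine key.trans (le_of_eq ?_)
    rw [hb, Real.sqrt_eq_rpow, ← Real.rpow_mul hbase.le]
    congr 1
    ring
  · simp only [h, if_false]
    rw [Real.zero_rpow hq0.ne', mul_zero]
    positivity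

/-- Hölder-based `y`-integration bound: for `p ∈ (1, ∞)` there is `C_p` such that for all
`x, η, z ∈ ℝ³` and `ψ ∈ L^p`,
`∫ χ(|x−η|+|z−y|>1)/((|x−η|+|z−y|)² ⟨|x−η|−|z−y|⟩) |ψ(y)| dy ≤ C_p ‖ψ‖_{L^p}`. -/
theorem holder_y_integration_bound (p : ℝ) (hp : 1 < p) :
    ∃ C : ℝ, 0 < C ∧
      ∀ (x η z : EuclideanSpace ℝ (Fin 3)) (ψ : EuclideanSpace ℝ (Fin 3) → ℝ),
        MemLp ψ (ENNReal.ofReal p) →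
        (∫ y : EuclideanSpace ℝ (Fin 3),
            (if 1 < ‖x - η‖ + ‖z - y‖ then
              1 / ((‖x - η‖ + ‖z - y‖) ^ 2
                * Real.sqrt (1 + (‖x - η‖ - ‖z - y‖) ^ 2)) else 0) * |ψ y|)
          ≤ C * (eLpNorm ψ (ENNReal.ofReal p) volume).toReal := by
  classical
  set q : ℝ := p / (p - 1) with hqdef
  have hpq : p.HolderConjugate q := (Real.holderConjugate_iff_eq_conjExponent hp).mpr rfl
  have hqp : q.HolderConjugate p := hpq.symm
  have hq1 : 1 < q := hqp.lt
  have hq0 : 0 < q := hqp.pos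
  have hp0 : 0 < p := hpq.pos
  -- the dominating one-dimensional integral
  set I : ℝ≥0∞ := ∫⁻ s : ℝ, ENNReal.ofReal ((1 + s ^ 2) ^ (-q / 2)) with hIdef
  have hIlt : I < ⊤ := by
    have hint : Integrable (fun s : ℝ => ((1:ℝ) + ‖s‖ ^ 2) ^ (-q / 2)) :=
      integrable_rpow_neg_one_add_norm_sq (E := ℝ) (by simpa using hq1)
    have heq : (fun s : ℝ => ((1:ℝ) + ‖s‖ ^ 2) ^ (-q / 2))
        = fun s : ℝ => ((1:ℝ) + s ^ 2) ^ (-q / 2) := by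
      funext s; rw [Real.norm_eq_abs, sq_abs]
    rw [heq] at hint
    have hnn : ∀ s : ℝ, 0 ≤ ((1:ℝ) + s ^ 2) ^ (-q / 2) := fun s =>
      Real.rpow_nonneg (by positivity) _
    have := hint.hasFiniteIntegral
    rw [HasFiniteIntegral] at this
    refine lt_of_le_of_lt (le_of_eq ?_) this
    apply lintegral_congr
    intro s
    rw [Real.enorm_eq_ofReal_abs, abs_of_nonneg (hnn s)]
  set A : ℝ≥0∞ := (volume : Measure E3).toSphere Set.univ * I with hAdef
  have hAne : A ≠ ⊤ :=
    ENNReal.mul_ne_top (measure_ne_top _ _) hIlt.ne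
  set B : ℝ≥0∞ := A ^ (1 / q) with hBdef
  have hBne : B ≠ ⊤ := ENNReal.rpow_ne_top_of_nonneg (by positivity) hAne
  refine ⟨B.toReal + 1, by positivity, ?_⟩
  intro x η z ψ hψ
  set R : ℝ := ‖x - η‖ with hRdef
  have hR0 : 0 ≤ R := norm_nonneg _
  set k : ℝ → ℝ := fun r =>
    if 1 < R + r then 1 / ((R + r) ^ 2 * Real.sqrt (1 + (R - r) ^ 2)) else 0 with hkdef
  have hkmeas : Measurable k := by
    apply Measurable.ite
    · exact measurableSet_lt measurable_const (measurable_const.add measurable_id)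
    · fun_prop
    · exact measurable_const
  have hk0 : ∀ r, 0 ≤ k r := by
    intro r
    rw [hkdef]
    dsimp only
    split
    · positivity
    · exact le_refl 0
  have hKmeas : Measurable fun y : E3 => k ‖z - y‖ :=
    hkmeas.comp ((measurable_const.sub measurable_id).norm)
  -- key L^q bound on the kernel
  have hKq : ∫⁻ y : E3, ENNReal.ofReal (k ‖z - y‖) ^ q ≤ A := by
    have hpt : ∀ y : E3, ENNReal.ofReal (k ‖z - y‖) ^ q
        = ENNReal.ofReal (k ‖z - y‖ ^ q) := fun y =>
      ENNReal.ofReal_rpow_of_nonneg (hk0 _) hq0.le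
    calc ∫⁻ y : E3, ENNReal.ofReal (k ‖z - y‖) ^ q
        = ∫⁻ y : E3, ENNReal.ofReal (k ‖z - y‖ ^ q) := by
          exact lintegral_congr fun y => hpt y
      _ = ∫⁻ w : E3, ENNReal.ofReal (k ‖w‖ ^ q) := by
          have hneg := (Measure.measurePreserving_neg (volume : Measure E3)).lintegral_comp
            (f := fun w : E3 => ENNReal.ofReal (k ‖z + w‖ ^ q))
            (((hkmeas.comp (measurable_const.add measurable_id).norm).pow_const q).ennreal_ofReal)
          have hadd := lintegral_add_left_eq_self
            (μ := (volume : Measure E3)) (fun w : E3 => ENNReal.ofReal (k ‖w‖ ^ q)) z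
          calc ∫⁻ y : E3, ENNReal.ofReal (k ‖z - y‖ ^ q)
              = ∫⁻ y : E3, ENNReal.ofReal (k ‖z + -y‖ ^ q) := by
                apply lintegral_congr; intro y; rw [sub_eq_add_neg]
            _ = ∫⁻ w : E3, ENNReal.ofReal (k ‖z + w‖ ^ q) := hneg
            _ = ∫⁻ w : E3, ENNReal.ofReal (k ‖w‖ ^ q) := hadd
      _ ≤ (volume : Measure E3).toSphere Set.univ *
            ∫⁻ r in Set.Ioi (0:ℝ), ENNReal.ofReal (r ^ 2) * ENNReal.ofReal (k r ^ q) := by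
          exact polar_le (fun r => ENNReal.ofReal (k r ^ q))
            ((hkmeas.pow_const q).ennreal_ofReal)
      _ ≤ (volume : Measure E3).toSphere Set.univ * I := by
          apply mul_le_mul_right
          calc ∫⁻ r in Set.Ioi (0:ℝ), ENNReal.ofReal (r ^ 2) * ENNReal.ofReal (k r ^ q)
              ≤ ∫⁻ r in Set.Ioi (0:ℝ),
                  ENNReal.ofReal ((1 + (r - R) ^ 2) ^ (-q / 2)) := by
                apply setLIntegral_mono
                  (by fun_prop)
                intro r hr
                rw [← ENNReal.ofReal_mul (by positivity)]
                apply ENNReal.ofReal_le_ofReal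
                have := pointwise_radial_bound hq1.le hR0 (le_of_lt hr)
                rw [hkdef]
                calc r ^ 2 * (if 1 < R + r then
                      1 / ((R + r) ^ 2 * Real.sqrt (1 + (R - r) ^ 2)) else 0) ^ q
                    ≤ (1 + (R - r) ^ 2) ^ (-q / 2) := this
                  _ = (1 + (r - R) ^ 2) ^ (-q / 2) := by rw [← neg_sub r R, neg_sq]
            _ ≤ ∫⁻ r : ℝ, ENNReal.ofReal ((1 + (r - R) ^ 2) ^ (-q / 2)) :=
                setLIntegral_le_lintegral _ _
            _ = I := by
                have := lintegral_add_right_eq_self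
                  (μ := (volume : Measure ℝ))
                  (fun s : ℝ => ENNReal.ofReal ((1 + s ^ 2) ^ (-q / 2))) (-R)
                rw [hIdef, ← this]
                apply lintegral_congr
                intro r
                rw [sub_eq_add_neg]
      _ = A := hAdef.symm
  -- now Hölder
  by_cases hint : Integrable (fun y : E3 =>
      (if 1 < R + ‖z - y‖ then
        1 / ((R + ‖z - y‖) ^ 2 * Real.sqrt (1 + (R - ‖z - y‖) ^ 2)) else 0) * |ψ y|) volume
  · rw [MeasureTheory.integral_eq_lintegral_of_nonneg_ae
      (Filter.Eventually.of_forall fun y => mul_nonneg (hk0 ‖z - y‖) (abs_nonneg _))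
      hint.aestronglyMeasurable]
    have habs : AEMeasurable (fun y : E3 => |ψ y|) volume := by
      simpa [Real.norm_eq_abs] using hψ.aestronglyMeasurable.norm.aemeasurable
    have hψm : AEMeasurable (fun y : E3 => ENNReal.ofReal |ψ y|) volume :=
      habs.ennreal_ofReal
    have hHolder : ∫⁻ y : E3, ENNReal.ofReal (k ‖z - y‖ * |ψ y|)
        ≤ B * eLpNorm ψ (ENNReal.ofReal p) volume := by
      have hprod : ∀ y : E3, ENNReal.ofReal (k ‖z - y‖ * |ψ y|)
          = ENNReal.ofReal (k ‖z - y‖) * ENNReal.ofReal |ψ y| := fun y =>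
        ENNReal.ofReal_mul (hk0 _)
      calc ∫⁻ y : E3, ENNReal.ofReal (k ‖z - y‖ * |ψ y|)
          = ∫⁻ y : E3, ((fun y : E3 => ENNReal.ofReal (k ‖z - y‖))
              * fun y : E3 => ENNReal.ofReal |ψ y|) y := by
            apply lintegral_congr; intro y; rw [hprod y]; rfl
        _ ≤ (∫⁻ y : E3, ENNReal.ofReal (k ‖z - y‖) ^ q) ^ (1 / q) *
              (∫⁻ y : E3, ENNReal.ofReal |ψ y| ^ p) ^ (1 / p) :=
            ENNReal.lintegral_mul_le_Lp_mul_Lq volume hqp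
              (hKmeas.ennreal_ofReal).aemeasurable hψm
        _ ≤ B * eLpNorm ψ (ENNReal.ofReal p) volume := by
            have h1 : (∫⁻ y : E3, ENNReal.ofReal (k ‖z - y‖) ^ q) ^ (1 / q) ≤ B :=
              ENNReal.rpow_le_rpow hKq (by positivity)
            have h2 : (∫⁻ y : E3, ENNReal.ofReal |ψ y| ^ p) ^ (1 / p)
                = eLpNorm ψ (ENNReal.ofReal p) volume := by
              rw [eLpNorm_eq_lintegral_rpow_enorm_toReal
                (by simpa [ENNReal.ofReal_eq_zero, not_le] using hp0) ENNReal.ofReal_ne_top,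
                ENNReal.toReal_ofReal hp0.le]
              congr 1
              apply lintegral_congr
              intro y
              rw [Real.enorm_eq_ofReal_abs]
            rw [← h2]
            exact mul_le_mul' h1 le_rfl
    have hfin : B * eLpNorm ψ (ENNReal.ofReal p) volume ≠ ⊤ :=
      ENNReal.mul_ne_top hBne hψ.eLpNorm_ne_top
    calc (∫⁻ y : E3, ENNReal.ofReal ((if 1 < R + ‖z - y‖ then
            1 / ((R + ‖z - y‖) ^ 2 * Real.sqrt (1 + (R - ‖z - y‖) ^ 2)) else 0)
              * |ψ y|)).toReal
        = (∫⁻ y : E3, ENNReal.ofReal (k ‖z - y‖ * |ψ y|)).toReal := rfl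
      _ ≤ (B * eLpNorm ψ (ENNReal.ofReal p) volume).toReal :=
          ENNReal.toReal_mono hfin hHolder
      _ = B.toReal * (eLpNorm ψ (ENNReal.ofReal p) volume).toReal := ENNReal.toReal_mul
      _ ≤ (B.toReal + 1) * (eLpNorm ψ (ENNReal.ofReal p) volume).toReal := by
          apply mul_le_mul_of_nonneg_right (by linarith) ENNReal.toReal_nonneg
  · rw [integral_undef hint]
    positivity
end

section
/- Uniform L^{q} bound for the commutator kernel tail: for every q ∈ (1, ∞] there is C_q such that for all R ≥ 0, ‖ w ↦ χ(R+|w| > 1)/((R+|w|)² ⟨R−|w|⟩) ‖_{L^q(ℝ³)} ≤ C_q, where the norm is over w ∈ ℝ³. -/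
open MeasureTheory Real Set Metric
open scoped ENNReal

section polar

variable {E : Type*} [NormedAddCommGroup E] [NormedSpace ℝ E] [Nontrivial E]
  [MeasurableSpace E] [BorelSpace E] [FiniteDimensional ℝ E]
  (μ : Measure E) [μ.IsAddHaarMeasure]

/-- Polar-coordinates formula for the Lebesgue integral of a radial function. -/
lemma lintegral_fun_norm_addHaar' (f : ℝ → ℝ≥0∞) (hf : Measurable f) :
    ∫⁻ x, f ‖x‖ ∂μ =
      μ.toSphere univ *
        ∫⁻ y in Ioi (0 : ℝ), ENNReal.ofReal (y ^ (Module.finrank ℝ E - 1)) * f y := calc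
  ∫⁻ x, f ‖x‖ ∂μ = ∫⁻ x : ({(0 : E)}ᶜ : Set E), f ‖x.1‖ ∂(μ.comap (↑)) := by
    rw [lintegral_subtype_comap (measurableSet_singleton _).compl (fun x => f ‖x‖),
      restrict_compl_singleton]
  _ = ∫⁻ y : sphere (0 : E) 1 × Ioi (0 : ℝ), f y.2
        ∂(μ.toSphere.prod (.volumeIoiPow (Module.finrank ℝ E - 1))) :=
    by
      refine Eq.trans ?_ (μ.measurePreserving_homeomorphUnitSphereProd.lintegral_comp
        (hf.comp (measurable_subtype_coe.comp measurable_snd)))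
      congr 1; ext x; simp
  _ = μ.toSphere univ *
        ∫⁻ z : Ioi (0 : ℝ), f z ∂(Measure.volumeIoiPow (Module.finrank ℝ E - 1)) := by
    rw [lintegral_prod (fun y : ↑(sphere (0 : E) 1) × ↑(Ioi (0 : ℝ)) => f ↑y.2)
        ((hf.comp (measurable_subtype_coe.comp measurable_snd)).aemeasurable)]
    simp [lintegral_const, mul_comm]
  _ = _ := by
    rw [Measure.volumeIoiPow,
      lintegral_withDensity_eq_lintegral_mul _
        ((measurable_subtype_coe.pow_const _).ennreal_ofReal)
        (show Measurable fun z : Ioi (0 : ℝ) => f ↑z from hf.comp measurable_subtype_coe)]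
    simp only [Pi.mul_apply]
    rw [← lintegral_subtype_comap measurableSet_Ioi
        (fun y : ℝ => ENNReal.ofReal (y ^ (Module.finrank ℝ E - 1)) * f y)]

end polar

/-- The key pointwise radial inequality. -/
lemma commutator_kernel_key_real {p R r : ℝ} (hp : 1 ≤ p) (hr : 0 < r) (hR : 0 ≤ R)
    (h1 : 1 < R + r) :
    r ^ 2 * (1 / ((R + r) ^ 2 * Real.sqrt (1 + (R - r) ^ 2))) ^ p
      ≤ (1 + (R - r) ^ 2) ^ (-p / 2) := by
  set A := R + r with hA
  set B := 1 + (R - r) ^ 2 with hB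
  have hA1 : 1 ≤ A := h1.le
  have hA0 : 0 < A := lt_trans one_pos h1
  have hB0 : (0 : ℝ) < B := by positivity
  have hsB : Real.sqrt B = B ^ (1 / 2 : ℝ) := Real.sqrt_eq_rpow B
  have hden : ((A ^ 2 * Real.sqrt B)) ^ p = A ^ (2 * p) * B ^ (p / 2) := by
    rw [Real.mul_rpow (by positivity) (Real.sqrt_nonneg _), hsB,
      ← Real.rpow_natCast A 2, ← Real.rpow_mul hA0.le, ← Real.rpow_mul hB0.le]
    push_cast
    ring_nf
  rw [Real.div_rpow zero_le_one (by positivity), Real.one_rpow, hden, neg_div,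
    Real.rpow_neg hB0.le]
  have hr2 : r ^ 2 ≤ A ^ (2 * p) := by
    have h2 : r ^ 2 ≤ A ^ 2 := by nlinarith
    have h3 : A ^ (2 : ℝ) ≤ A ^ (2 * p) :=
      Real.rpow_le_rpow_of_exponent_le hA1 (by nlinarith)
    calc r ^ 2 ≤ A ^ 2 := h2
      _ = A ^ (2 : ℝ) := by rw [← Real.rpow_natCast A 2]; norm_num
      _ ≤ A ^ (2 * p) := h3
  have hApos : (0 : ℝ) < A ^ (2 * p) := by positivity
  have hBpos : (0 : ℝ) < B ^ (p / 2) := by positivity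
  calc r ^ 2 * (1 / (A ^ (2 * p) * B ^ (p / 2)))
      ≤ A ^ (2 * p) * (1 / (A ^ (2 * p) * B ^ (p / 2))) := by
        exact mul_le_mul_of_nonneg_right hr2 (by positivity)
    _ = (B ^ (p / 2))⁻¹ := by
        field_simp

/-- Uniform `L^q` bound for the commutator kernel tail: for every `q ∈ (1, ∞]` there is a
finite constant `C_q` such that for all `R ≥ 0`,
`‖ w ↦ χ(R+|w|>1)/((R+|w|)² ⟨R−|w|⟩) ‖_{L^q(ℝ³)} ≤ C_q`. -/
theorem commutator_kernel_tail_Lq_uniform (q : ℝ≥0∞) (hq : 1 < q) :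
    ∃ C : ℝ≥0∞, C ≠ ⊤ ∧ ∀ R : ℝ, 0 ≤ R →
      eLpNorm (fun w : EuclideanSpace ℝ (Fin 3) =>
          if 1 < R + ‖w‖ then
            1 / ((R + ‖w‖) ^ 2 * Real.sqrt (1 + (R - ‖w‖) ^ 2)) else 0)
        q volume ≤ C := by
  have key_bound : ∀ R : ℝ, 0 ≤ R → ∀ w : EuclideanSpace ℝ (Fin 3),
      ‖(if 1 < R + ‖w‖ then
          1 / ((R + ‖w‖) ^ 2 * Real.sqrt (1 + (R - ‖w‖) ^ 2)) else 0)‖ ≤ 1 := by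
    intro R hR w
    split_ifs with h
    · have hs : (1 : ℝ) ≤ Real.sqrt (1 + (R - ‖w‖) ^ 2) := by
        nlinarith [Real.sq_sqrt (show (0:ℝ) ≤ 1 + (R - ‖w‖) ^ 2 by positivity),
          Real.sqrt_nonneg (1 + (R - ‖w‖) ^ 2)]
      have hden : (1 : ℝ) ≤ (R + ‖w‖) ^ 2 * Real.sqrt (1 + (R - ‖w‖) ^ 2) := by
        nlinarith
      rw [Real.norm_eq_abs, abs_of_nonneg (by positivity), div_le_one (by linarith)]
      linarith
    · simp
  rcases eq_or_ne q ⊤ with rfl | hq'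
  · refine ⟨1, ENNReal.one_ne_top, fun R hR => ?_⟩
    rw [eLpNorm_exponent_top]
    calc eLpNormEssSup _ volume ≤ ENNReal.ofReal 1 :=
          eLpNormEssSup_le_of_ae_bound (C := 1) (.of_forall (key_bound R hR))
      _ = 1 := ENNReal.ofReal_one
  · set p := q.toReal with hpdef
    have hp : 1 < p := by
      have := ENNReal.toReal_strict_mono hq' hq
      simpa using this
    have hp0 : 0 < p := lt_trans one_pos hp
    set h : ℝ → ℝ≥0∞ := fun s => ENNReal.ofReal ((1 + s ^ 2) ^ (-p / 2)) with hh
    have hh_meas : Measurable h := by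
      apply Measurable.ennreal_ofReal
      exact (measurable_const.add (measurable_id.pow_const 2)).pow_const _
    set I : ℝ≥0∞ := ∫⁻ s : ℝ, h s with hI
    set S : ℝ≥0∞ := (volume : Measure (EuclideanSpace ℝ (Fin 3))).toSphere univ with hS
    have hS_ne : S ≠ ⊤ := measure_ne_top _ _
    have hI_ne : I ≠ ⊤ := by
      have hint : Integrable (fun s : ℝ => ((1 : ℝ) + ‖s‖ ^ 2) ^ (-p / 2)) :=
        integrable_rpow_neg_one_add_norm_sq (by simpa using hp)
      have hle : I ≤ ∫⁻ s : ℝ, ‖((1 : ℝ) + ‖s‖ ^ 2) ^ (-p / 2)‖₊ := by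
        refine le_trans (le_of_eq ?_)
          (lintegral_ofReal_le_lintegral_enorm
            (fun s : ℝ => ((1 : ℝ) + ‖s‖ ^ 2) ^ (-p / 2)))
        refine lintegral_congr fun s => ?_
        rw [hh]; simp [Real.norm_eq_abs, sq_abs]
      exact ne_of_lt (lt_of_le_of_lt hle hint.2)
    refine ⟨(S * I) ^ (1 / p), ?_, fun R hR => ?_⟩
    · exact ENNReal.rpow_ne_top_of_nonneg (by positivity) (ENNReal.mul_ne_top hS_ne hI_ne)
    rw [eLpNorm_eq_lintegral_rpow_enorm_toReal (ne_of_gt (lt_trans zero_lt_one hq)) hq']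
    refine ENNReal.rpow_le_rpow ?_ (by positivity)
    -- the radial function
    set u : ℝ → ℝ := fun r =>
      if 1 < R + r then 1 / ((R + r) ^ 2 * Real.sqrt (1 + (R - r) ^ 2)) else 0 with hu
    have hu_nonneg : ∀ r, 0 ≤ u r := by
      intro r; rw [hu]; dsimp only; split_ifs with hc
      · positivity
      · exact le_rfl
    have hu_meas : Measurable u := by
      apply Measurable.ite
      · exact measurableSet_lt measurable_const (measurable_const.add measurable_id)
      · fun_prop
      · exact measurable_const
    set g : ℝ → ℝ≥0∞ := fun r => ENNReal.ofReal (u r) ^ p with hg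
    have hg_meas : Measurable g := hu_meas.ennreal_ofReal.pow_const p
    have step1 : (∫⁻ w : EuclideanSpace ℝ (Fin 3),
        (‖(if 1 < R + ‖w‖ then
            1 / ((R + ‖w‖) ^ 2 * Real.sqrt (1 + (R - ‖w‖) ^ 2)) else 0)‖ₑ : ℝ≥0∞) ^ p)
        = ∫⁻ w : EuclideanSpace ℝ (Fin 3), g ‖w‖ := by
      refine lintegral_congr fun w => ?_
      rw [hg]
      congr 1
      exact Real.enorm_eq_ofReal (hu_nonneg ‖w‖)
    rw [step1, lintegral_fun_norm_addHaar' volume g hg_meas]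
    have hrank : Module.finrank ℝ (EuclideanSpace ℝ (Fin 3)) - 1 = 2 := by
      simp [finrank_euclideanSpace_fin]
    rw [hrank]
    refine mul_le_mul_right ?_ S
    calc ∫⁻ y in Ioi (0 : ℝ), ENNReal.ofReal (y ^ 2) * g y
        ≤ ∫⁻ y in Ioi (0 : ℝ), h (R - y) := by
          refine setLIntegral_mono' measurableSet_Ioi fun r hr => ?_
          rw [hg, hh]
          dsimp only
          by_cases hc : 1 < R + r
          · have huval : u r = 1 / ((R + r) ^ 2 * Real.sqrt (1 + (R - r) ^ 2)) := by
              rw [hu]; simp [hc]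
            rw [huval, ENNReal.ofReal_rpow_of_nonneg (by positivity) hp0.le,
              ← ENNReal.ofReal_mul (by positivity)]
            exact ENNReal.ofReal_le_ofReal
              (commutator_kernel_key_real hp.le hr hR hc)
          · have huval : u r = 0 := by rw [hu]; simp [hc]
            rw [huval, ENNReal.ofReal_zero, ENNReal.zero_rpow_of_pos hp0, mul_zero]
            exact zero_le
      _ ≤ ∫⁻ y : ℝ, h (R - y) := setLIntegral_le_lintegral _ _
      _ = I := by
          rw [hI]
          exact (Measure.measurePreserving_sub_left volume R).lintegral_comp hh_meas
end
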